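/- Let $C = s_{12} + s_{13} + \cdots + s_{1n}$ be the sum of transpositions in the group algebra $\mathbb{C}[S_n]$ (a Jucys–Murphy-type element). Then $C$ acts as a scalar on the irreducible representation $\pi_\mu$ of $S_n$ if and only if the Young diagram $\mu$ is a rectangle; and if $\mu$ is a rectangle of height $a$ and width $b$, the scalar is $b - a$. -/

import Mathlib

open scoped Classical

noncomputable section

/-- The group algebra `ℂ[S_n]`. -/
abbrev GA (n : ℕ) := MonoidAlgebra ℂ (Equiv.Perm (Fin n))

/-- A group element viewed in the group algebra. -/
def ga {n : ℕ} (σ : Equiv.Perm (Fin n)) : GA n := MonoidAlgebra.of ℂ _ σ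

/-- The row group of a Young tableau `T`: permutations preserving the rows. -/
def rowFinset (μ : YoungDiagram) {n : ℕ} (T : {x : ℕ × ℕ // x ∈ μ.cells} ≃ Fin n) :
    Finset (Equiv.Perm (Fin n)) :=
  Finset.univ.filter fun σ => ∀ k, ((T.symm (σ k)) : ℕ × ℕ).1 = ((T.symm k) : ℕ × ℕ).1

/-- The column group of a Young tableau: permutations preserving the columns. -/
def colFinset (μ : YoungDiagram) {n : ℕ} (T : {x : ℕ × ℕ // x ∈ μ.cells} ≃ Fin n) :
    Finset (Equiv.Perm (Fin n)) :=
  Finset.univ.filter fun σ => ∀ k, ((T.symm (σ k)) : ℕ × ℕ).2 = ((T.symm k) : ℕ × ℕ).2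

/-- The row symmetrizer `a_μ`. -/
def aSym (μ : YoungDiagram) {n : ℕ} (T : {x : ℕ × ℕ // x ∈ μ.cells} ≃ Fin n) : GA n :=
  ∑ σ ∈ rowFinset μ T, ga σ

/-- The signed column symmetrizer `b_μ`. -/
def bSym (μ : YoungDiagram) {n : ℕ} (T : {x : ℕ × ℕ // x ∈ μ.cells} ≃ Fin n) : GA n :=
  ∑ σ ∈ colFinset μ T, ((Equiv.Perm.sign σ : ℤ) : ℂ) • ga σ

/-- The Young symmetrizer `c_μ = a_μ b_μ`; the irreducible representation `π_μ` is the
left ideal `ℂ[S_n] c_μ`. -/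
def cSym (μ : YoungDiagram) {n : ℕ} (T : {x : ℕ × ℕ // x ∈ μ.cells} ≃ Fin n) : GA n :=
  aSym μ T * bSym μ T

/-- The Jucys–Murphy-type element `C = s_{12} + s_{13} + ⋯ + s_{1n}` (with the
distinguished index realized as `0 : Fin n`). -/
def JM (n : ℕ) [NeZero n] : GA n :=
  ∑ m ∈ Finset.univ.filter (fun m : Fin n => m ≠ 0), ga (Equiv.swap 0 m)

theorem Equiv.Perm.apply_inv_self {α : Type*} (f : Equiv.Perm α) (x : α) : f (f⁻¹ x) = x :=
  f.apply_symm_apply x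

instance GA.instCoeFun (n : ℕ) : CoeFun (GA n) (fun _ => Equiv.Perm (Fin n) → ℂ) :=
  ⟨fun x => x.coeff⟩

namespace StmtZero
variable {n : ℕ} (μ : YoungDiagram) (T : {x : ℕ × ℕ // x ∈ μ.cells} ≃ Fin n)

def rw (k : Fin n) : ℕ := ((T.symm k) : ℕ × ℕ).1
def cl (k : Fin n) : ℕ := ((T.symm k) : ℕ × ℕ).2
lemma mem_rowFinset {σ : Equiv.Perm (Fin n)} :
    σ ∈ rowFinset μ T ↔ ∀ k, rw μ T (σ k) = rw μ T k := by simp [rowFinset, rw]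
lemma mem_colFinset {σ : Equiv.Perm (Fin n)} :
    σ ∈ colFinset μ T ↔ ∀ k, cl μ T (σ k) = cl μ T k := by simp [colFinset, cl]
lemma coord_inj {k k' : Fin n} (h1 : rw μ T k = rw μ T k') (h2 : cl μ T k = cl μ T k') :
    k = k' :=
  T.symm.injective (Subtype.ext (Prod.ext h1 h2))
lemma one_mem_row : (1 : Equiv.Perm (Fin n)) ∈ rowFinset μ T := by simp [mem_rowFinset]
lemma one_mem_col : (1 : Equiv.Perm (Fin n)) ∈ colFinset μ T := by simp [mem_colFinset]
lemma mul_mem_row {σ τ : Equiv.Perm (Fin n)} (hσ : σ ∈ rowFinset μ T) (hτ : τ ∈ rowFinset μ T) :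
    σ * τ ∈ rowFinset μ T := by
  rw [mem_rowFinset] at *; intro k; simpa using (hσ (τ k)).trans (hτ k)
lemma mul_mem_col {σ τ : Equiv.Perm (Fin n)} (hσ : σ ∈ colFinset μ T) (hτ : τ ∈ colFinset μ T) :
    σ * τ ∈ colFinset μ T := by
  rw [mem_colFinset] at *; intro k; simpa using (hσ (τ k)).trans (hτ k)
lemma inv_mem_row {σ : Equiv.Perm (Fin n)} (hσ : σ ∈ rowFinset μ T) :
    σ⁻¹ ∈ rowFinset μ T := by
  rw [mem_rowFinset] at *; intro k; have := hσ (σ⁻¹ k); simpa using this.symm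
lemma inv_mem_col {σ : Equiv.Perm (Fin n)} (hσ : σ ∈ colFinset μ T) :
    σ⁻¹ ∈ colFinset μ T := by
  rw [mem_colFinset] at *; intro k; have := hσ (σ⁻¹ k); simpa using this.symm
lemma row_inter_col {σ : Equiv.Perm (Fin n)} (h1 : σ ∈ rowFinset μ T) (h2 : σ ∈ colFinset μ T) :
    σ = 1 := by
  rw [mem_rowFinset] at h1; rw [mem_colFinset] at h2
  ext k
  exact congrArg _ (coord_inj μ T (h1 k) (h2 k))
lemma swap_mem_row {u v : Fin n} (h : rw μ T u = rw μ T v) :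
    Equiv.swap u v ∈ rowFinset μ T := by
  rw [mem_rowFinset]; intro k
  rcases eq_or_ne k u with rfl | hu
  · rw [Equiv.swap_apply_left]; exact h.symm
  rcases eq_or_ne k v with rfl | hv
  · rw [Equiv.swap_apply_right]; exact h
  · rw [Equiv.swap_apply_of_ne_of_ne hu hv]
lemma swap_mem_col {u v : Fin n} (h : cl μ T u = cl μ T v) :
    Equiv.swap u v ∈ colFinset μ T := by
  rw [mem_colFinset]; intro k
  rcases eq_or_ne k u with rfl | hu
  · rw [Equiv.swap_apply_left]; exact h.symm
  rcases eq_or_ne k v with rfl | hv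
  · rw [Equiv.swap_apply_right]; exact h
  · rw [Equiv.swap_apply_of_ne_of_ne hu hv]

lemma ga_eq (σ : Equiv.Perm (Fin n)) : ga σ = MonoidAlgebra.single σ (1:ℂ) := rfl
def sgn (σ : Equiv.Perm (Fin n)) : ℂ := ((Equiv.Perm.sign σ : ℤ) : ℂ)
lemma sgn_mul (σ τ : Equiv.Perm (Fin n)) : sgn (σ * τ) = sgn σ * sgn τ := by simp [sgn]
lemma sgn_one : sgn (1 : Equiv.Perm (Fin n)) = 1 := by simp [sgn]
lemma sgn_sq (σ : Equiv.Perm (Fin n)) : sgn σ * sgn σ = 1 := by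
  rcases Int.units_eq_one_or (Equiv.Perm.sign σ) with h | h <;> simp [sgn, h]
lemma sgn_swap {u v : Fin n} (h : u ≠ v) : sgn (Equiv.swap u v) = -1 := by
  simp [sgn, Equiv.Perm.sign_swap h]

lemma cSym_eq : cSym μ T =
    ∑ ρ ∈ rowFinset μ T, ∑ κ ∈ colFinset μ T,
      sgn κ • MonoidAlgebra.single (ρ * κ) (1:ℂ) := by
  rw [cSym, aSym, bSym, Finset.sum_mul]
  refine Finset.sum_congr rfl fun ρ _ => ?_
  rw [Finset.mul_sum]
  refine Finset.sum_congr rfl fun κ _ => ?_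
  rw [ga_eq, ga_eq, mul_smul_comm, MonoidAlgebra.single_mul_single, mul_one]
  rfl

lemma cSym_apply (g : Equiv.Perm (Fin n)) : cSym μ T g =
    ∑ ρ ∈ rowFinset μ T, ∑ κ ∈ colFinset μ T,
      (if ρ * κ = g then sgn κ else 0) := by
  rw [cSym_eq, MonoidAlgebra.coeff_sum, Finset.sum_apply']
  refine Finset.sum_congr rfl fun ρ _ => ?_
  rw [MonoidAlgebra.coeff_sum, Finset.sum_apply']
  refine Finset.sum_congr rfl fun κ _ => ?_
  simp [MonoidAlgebra.coeff_smul, MonoidAlgebra.coeff_single, Finsupp.single_apply]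

/-- B1': value on a product row·col -/
lemma cSym_apply_mul {ρ₀ κ₀ : Equiv.Perm (Fin n)} (h1 : ρ₀ ∈ rowFinset μ T)
    (h2 : κ₀ ∈ colFinset μ T) : cSym μ T (ρ₀ * κ₀) = sgn κ₀ := by
  rw [cSym_apply]
  rw [Finset.sum_eq_single ρ₀]
  · rw [Finset.sum_eq_single κ₀]
    · simp
    · intro κ hκ hne
      rw [if_neg]
      intro h
      exact hne (mul_left_cancel h)
    · intro h; exact absurd h2 (by simpa using h)
  · intro ρ hρ hne
    refine Finset.sum_eq_zero fun κ hκ => ?_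
    rw [if_neg]
    intro h
    -- ρ κ = ρ₀ κ₀ ⇒ ρ₀⁻¹ ρ = κ₀ κ⁻¹ ∈ R ∩ C ⇒ 1
    have key : ρ₀⁻¹ * ρ = κ₀ * κ⁻¹ := by
      rw [eq_comm, mul_inv_eq_iff_eq_mul, mul_assoc, h, ← mul_assoc, inv_mul_cancel, one_mul]
    have hm1 : ρ₀⁻¹ * ρ ∈ rowFinset μ T := mul_mem_row μ T (inv_mem_row μ T h1) hρ
    have hm2 : ρ₀⁻¹ * ρ ∈ colFinset μ T := key ▸ mul_mem_col μ T h2 (inv_mem_col μ T hκ)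
    have := row_inter_col μ T hm1 hm2
    exact hne (by rwa [inv_mul_eq_one, eq_comm] at this)
  · intro h; exact absurd h1 (by simpa using h)

/-- B2': value vanishes off R·C -/
lemma cSym_apply_eq_zero {g : Equiv.Perm (Fin n)}
    (h : ∀ ρ ∈ rowFinset μ T, ∀ κ ∈ colFinset μ T, ρ * κ ≠ g) : cSym μ T g = 0 := by
  rw [cSym_apply]
  refine Finset.sum_eq_zero fun ρ hρ => Finset.sum_eq_zero fun κ hκ => ?_
  rw [if_neg (h ρ hρ κ hκ)]


lemma sgn_inv (σ : Equiv.Perm (Fin n)) : sgn σ⁻¹ = sgn σ := by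
  simp [sgn]

/-- left covariance: c(ρ₀ g) = c g for ρ₀ in the row group -/
lemma cSym_row_mul {ρ₀ : Equiv.Perm (Fin n)} (h1 : ρ₀ ∈ rowFinset μ T)
    (g : Equiv.Perm (Fin n)) : cSym μ T (ρ₀ * g) = cSym μ T g := by
  rw [cSym_apply, cSym_apply]
  refine Finset.sum_nbij' (fun ρ => ρ₀⁻¹ * ρ) (fun ρ => ρ₀ * ρ) ?_ ?_ ?_ ?_ ?_
  · intro ρ hρ; exact mul_mem_row μ T (inv_mem_row μ T h1) hρ
  · intro ρ hρ; exact mul_mem_row μ T h1 hρ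
  · intro ρ _; simp [← mul_assoc]
  · intro ρ _; simp [← mul_assoc]
  · intro ρ _
    refine Finset.sum_congr rfl fun κ _ => if_congr ?_ rfl rfl
    rw [mul_assoc, inv_mul_eq_iff_eq_mul]

/-- right covariance: c(g κ₀) = sgn κ₀ * c g -/
lemma cSym_mul_col {κ₀ : Equiv.Perm (Fin n)} (h2 : κ₀ ∈ colFinset μ T)
    (g : Equiv.Perm (Fin n)) : cSym μ T (g * κ₀) = sgn κ₀ * cSym μ T g := by
  rw [cSym_apply, cSym_apply, Finset.mul_sum]
  refine Finset.sum_congr rfl fun ρ _ => ?_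
  rw [Finset.mul_sum]
  refine Finset.sum_nbij' (fun κ => κ * κ₀⁻¹) (fun κ => κ * κ₀) ?_ ?_ ?_ ?_ ?_
  · intro κ hκ; exact mul_mem_col μ T hκ (inv_mem_col μ T h2)
  · intro κ hκ; exact mul_mem_col μ T hκ h2
  · intro κ _; simp [mul_assoc]
  · intro κ _; simp [mul_assoc]
  · intro κ _
    by_cases hc : ρ * κ = g * κ₀
    · rw [if_pos hc, if_pos (by rw [← mul_assoc, mul_inv_eq_iff_eq_mul]; exact hc)]
      rw [sgn_mul, sgn_inv]
      calc sgn κ = sgn κ * (sgn κ₀ * sgn κ₀) := by rw [sgn_sq, mul_one]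
        _ = sgn κ₀ * (sgn κ * sgn κ₀) := by ring
    · rw [if_neg hc, if_neg (by rw [← mul_assoc, mul_inv_eq_iff_eq_mul]; exact hc), mul_zero]

/-- value at the identity -/
lemma cSym_apply_one : cSym μ T 1 = 1 := by
  have := cSym_apply_mul μ T (one_mem_row μ T) (one_mem_col μ T)
  rwa [one_mul, sgn_one] at this

/-- a permutation fixing everything outside {p, k} is 1 or the swap -/
lemma perm_eq_one_or_swap {p k : Fin n} (σ : Equiv.Perm (Fin n))
    (h : ∀ x, x ≠ p → x ≠ k → σ x = x) : σ = 1 ∨ σ = Equiv.swap p k := by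
  have hp : σ p = p ∨ σ p = k := by
    by_contra hc
    push_neg at hc
    have := h (σ p) hc.1 hc.2
    have : σ p = p := σ.injective this
    exact hc.1 this
  rcases hp with h1 | h1
  · left
    have hk : σ k = k := by
      by_cases hkp : σ k = p
      · have hkp2 : k = p := σ.injective (hkp.trans h1.symm)
        rw [hkp2]; exact h1
      · by_contra hkk
        have := h (σ k) hkp hkk
        exact hkk (σ.injective this)
    apply Equiv.ext
    intro x
    rcases eq_or_ne x p with rfl | hxp
    · simpa using h1
    rcases eq_or_ne x k with rfl | hxk
    · simpa using hk
    · simpa using h x hxp hxk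
  · right
    have hk : σ k = p := by
      by_contra hkp
      have hkk : σ k ≠ k := fun hh => by
        have hpk : p = k := σ.injective (h1.trans hh.symm)
        exact hkp (hh.trans hpk.symm)
      have := h (σ k) hkp hkk
      exact hkk (σ.injective this)
    apply Equiv.ext
    intro x
    rcases eq_or_ne x p with rfl | hxp
    · rw [Equiv.swap_apply_left]; exact h1
    rcases eq_or_ne x k with rfl | hxk
    · rw [Equiv.swap_apply_right]; exact hk
    · rw [Equiv.swap_apply_of_ne_of_ne hxp hxk]
      exact h x hxp hxk

/-- value at a transposition -/
lemma cSym_apply_swap {p k : Fin n} (hne : k ≠ p) :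
    cSym μ T (Equiv.swap p k) =
      (if rw μ T k = rw μ T p then 1 else 0) - (if cl μ T k = cl μ T p then 1 else 0) := by
  by_cases hr : rw μ T k = rw μ T p
  · have hc : ¬ cl μ T k = cl μ T p := fun hc => hne (coord_inj μ T hr hc)
    rw [if_pos hr, if_neg hc]
    have h1 := cSym_apply_mul μ T (swap_mem_row μ T hr) (one_mem_col μ T)
    rw [mul_one, sgn_one] at h1
    rw [Equiv.swap_comm, h1]
    norm_num
  · by_cases hc : cl μ T k = cl μ T p
    · rw [if_neg hr, if_pos hc]
      have h1 := cSym_apply_mul μ T (one_mem_row μ T) (swap_mem_col μ T hc)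
      rw [one_mul] at h1
      rw [Equiv.swap_comm, h1, sgn_swap hne]
      norm_num
    · rw [if_neg hr, if_neg hc, sub_zero]
      refine cSym_apply_eq_zero μ T fun ρ hρ κ hκ habs => ?_
      have hfix : ∀ x, x ≠ p → x ≠ k → κ x = x := by
        intro x hxp hxk
        have h1 : (ρ * κ) x = x := by
          rw [habs, Equiv.swap_apply_of_ne_of_ne hxp hxk]
        have h2 : κ x = ρ⁻¹ x := by
          have := congrArg (ρ⁻¹ ·) h1
          simpa using this
        refine coord_inj μ T ?_ ?_
        · rw [h2]
          exact (mem_rowFinset μ T).1 (inv_mem_row μ T hρ) x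
        · exact (mem_colFinset μ T).1 hκ x
      rcases perm_eq_one_or_swap κ hfix with rfl | rfl
      · rw [mul_one] at habs
        subst habs
        have := (mem_rowFinset μ T).1 hρ p
        rw [Equiv.swap_apply_left] at this
        exact hr this
      · have hρ1 : ρ = 1 := by
          have : ρ * (Equiv.swap p k * Equiv.swap p k) = Equiv.swap p k * Equiv.swap p k := by
            rw [← mul_assoc, habs]
          simpa using this
        subst hρ1
        have := (mem_colFinset μ T).1 hκ p
        rw [Equiv.swap_apply_left] at this
        exact hc this


lemma cell_mem (k : Fin n) : ((T.symm k : ℕ × ℕ)) ∈ μ := by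
  have := (T.symm k).2
  rwa [YoungDiagram.mem_cells] at this

/-- E': the basic swap-sum in terms of row/column cardinalities -/
lemma sum_swap_coeff (p : Fin n) :
    ∑ k ∈ Finset.univ.filter (fun k => k ≠ p), cSym μ T (Equiv.swap p k) =
      ((Finset.univ.filter fun k => rw μ T k = rw μ T p).card : ℂ) -
        ((Finset.univ.filter fun k => cl μ T k = cl μ T p).card : ℂ) := by
  have hstep : ∑ k ∈ Finset.univ.filter (fun k => k ≠ p), cSym μ T (Equiv.swap p k) =
      ∑ k ∈ Finset.univ.filter (fun k => k ≠ p),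
        ((if rw μ T k = rw μ T p then (1:ℂ) else 0) - (if cl μ T k = cl μ T p then 1 else 0)) := by
    refine Finset.sum_congr rfl fun k hk => ?_
    exact cSym_apply_swap μ T (Finset.mem_filter.1 hk).2
  rw [hstep, Finset.sum_sub_distrib, Finset.sum_boole, Finset.sum_boole]
  have herase : ∀ f : Fin n → ℕ,
      (Finset.univ.filter fun k => k ≠ p).filter (fun k => f k = f p) =
        ((Finset.univ.filter fun k => f k = f p).erase p) := by
    intro f
    ext k
    simp [Finset.mem_erase, and_comm]
  rw [herase (rw μ T), herase (cl μ T)]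
  have hmemr : p ∈ (Finset.univ.filter fun k => rw μ T k = rw μ T p) := by simp
  have hmemc : p ∈ (Finset.univ.filter fun k => cl μ T k = cl μ T p) := by simp
  rw [Finset.card_erase_of_mem hmemr, Finset.card_erase_of_mem hmemc]
  have h1 : 1 ≤ (Finset.univ.filter fun k => rw μ T k = rw μ T p).card :=
    Finset.card_pos.2 ⟨p, hmemr⟩
  have h2 : 1 ≤ (Finset.univ.filter fun k => cl μ T k = cl μ T p).card :=
    Finset.card_pos.2 ⟨p, hmemc⟩
  rw [Nat.cast_sub h1, Nat.cast_sub h2]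
  push_cast
  ring

/-- row cardinality equals the row length of the diagram -/
lemma rowCard_eq_rowLen (p : Fin n) :
    (Finset.univ.filter fun k => rw μ T k = rw μ T p).card = μ.rowLen (rw μ T p) := by
  rw [YoungDiagram.rowLen_eq_card]
  refine Finset.card_bij (fun k _ => (T.symm k : ℕ × ℕ)) ?_ ?_ ?_
  · intro k hk
    rw [YoungDiagram.mem_row_iff]
    exact ⟨cell_mem μ T k, (Finset.mem_filter.1 hk).2⟩
  · intro k _ k' _ h
    exact T.symm.injective (Subtype.ext h)
  · intro x hx
    rw [YoungDiagram.mem_row_iff] at hx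
    have hc : x ∈ μ.cells := (YoungDiagram.mem_cells _).2 hx.1
    refine ⟨T ⟨x, hc⟩, ?_, by simp⟩
    simp only [Finset.mem_filter, Finset.mem_univ, true_and, rw, Equiv.symm_apply_apply]
    exact Finset.mem_filter.2 ⟨Finset.mem_univ _, by simpa [rw] using hx.2⟩

/-- column cardinality equals the column length of the diagram -/
lemma colCard_eq_colLen (p : Fin n) :
    (Finset.univ.filter fun k => cl μ T k = cl μ T p).card = μ.colLen (cl μ T p) := by
  rw [YoungDiagram.colLen_eq_card]
  refine Finset.card_bij (fun k _ => (T.symm k : ℕ × ℕ)) ?_ ?_ ?_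
  · intro k hk
    rw [YoungDiagram.mem_col_iff]
    exact ⟨cell_mem μ T k, (Finset.mem_filter.1 hk).2⟩
  · intro k _ k' _ h
    exact T.symm.injective (Subtype.ext h)
  · intro x hx
    rw [YoungDiagram.mem_col_iff] at hx
    have hc : x ∈ μ.cells := (YoungDiagram.mem_cells _).2 hx.1
    refine ⟨T ⟨x, hc⟩, ?_, by simp⟩
    simp only [Finset.mem_filter, Finset.mem_univ, true_and, cl, Equiv.symm_apply_apply]
    exact Finset.mem_filter.2 ⟨Finset.mem_univ _, by simpa [cl] using hx.2⟩

section Rect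
variable {a b : ℕ} (hrect : ∀ x : ℕ × ℕ, x ∈ μ ↔ x.1 < a ∧ x.2 < b)

include hrect

lemma rowLen_rect {i : ℕ} (hi : i < a) : μ.rowLen i = b := by
  rcases Nat.eq_zero_or_pos b with rfl | hb
  · by_contra h
    have : (i, 0) ∈ μ := YoungDiagram.mem_iff_lt_rowLen.2 (Nat.pos_of_ne_zero h)
    exact absurd ((hrect _).1 this).2 (by simp)
  · have h1 : (i, b - 1) ∈ μ := (hrect _).2 ⟨hi, by omega⟩
    have h2 : (i, b) ∉ μ := fun h => by have := ((hrect _).1 h).2; omega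
    rw [YoungDiagram.mem_iff_lt_rowLen] at h1 h2
    omega

lemma colLen_rect {j : ℕ} (hj : j < b) : μ.colLen j = a := by
  rcases Nat.eq_zero_or_pos a with rfl | ha
  · by_contra h
    have : (0, j) ∈ μ := YoungDiagram.mem_iff_lt_colLen.2 (Nat.pos_of_ne_zero h)
    exact absurd ((hrect _).1 this).1 (by simp)
  · have h1 : (a - 1, j) ∈ μ := (hrect _).2 ⟨by omega, hj⟩
    have h2 : (a, j) ∉ μ := fun h => by have := ((hrect _).1 h).1; omega
    rw [YoungDiagram.mem_iff_lt_colLen] at h1 h2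
    omega

lemma rw_lt (k : Fin n) : rw μ T k < a := ((hrect _).1 (cell_mem μ T k)).1
lemma cl_lt (k : Fin n) : cl μ T k < b := ((hrect _).1 (cell_mem μ T k)).2

/-- Lemma E: base swap-sum under the rectangle hypothesis -/
lemma sum_swap_coeff_rect (p : Fin n) :
    ∑ k ∈ Finset.univ.filter (fun k => k ≠ p), cSym μ T (Equiv.swap p k) =
      (b : ℂ) - (a : ℂ) := by
  rw [sum_swap_coeff, rowCard_eq_rowLen, colCard_eq_colLen,
    rowLen_rect μ hrect (rw_lt μ T hrect p), colLen_rect μ hrect (cl_lt μ T hrect p)]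


omit hrect in
lemma colCard_val (j : ℕ) :
    (Finset.univ.filter fun k => cl μ T k = j).card = μ.colLen j := by
  rw [YoungDiagram.colLen_eq_card]
  refine Finset.card_bij (fun k _ => (T.symm k : ℕ × ℕ)) ?_ ?_ ?_
  · intro k hk
    rw [YoungDiagram.mem_col_iff]
    exact ⟨cell_mem μ T k, (Finset.mem_filter.1 hk).2⟩
  · intro k _ k' _ h
    exact T.symm.injective (Subtype.ext h)
  · intro x hx
    rw [YoungDiagram.mem_col_iff] at hx
    have hc : x ∈ μ.cells := (YoungDiagram.mem_cells _).2 hx.1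
    refine ⟨T ⟨x, hc⟩, ?_, by simp⟩
    simp only [Finset.mem_filter, Finset.mem_univ, true_and, cl, Equiv.symm_apply_apply]
    exact Finset.mem_filter.2 ⟨Finset.mem_univ _, by simpa [cl] using hx.2⟩

/-- Lemma G: if g is not in R·C, then for any point p there is a row-pair avoiding p
whose g⁻¹-images share a column. -/
lemma exists_good_pair (p : Fin n) {g : Equiv.Perm (Fin n)}
    (hg : ∀ ρ ∈ rowFinset μ T, ∀ κ ∈ colFinset μ T, ρ * κ ≠ g) :
    ∃ u v : Fin n, u ≠ v ∧ u ≠ p ∧ v ≠ p ∧ rw μ T u = rw μ T v ∧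
      cl μ T (g⁻¹ u) = cl μ T (g⁻¹ v) := by
  by_contra hno
  push_neg at hno
  have ha : rw μ T p < a := rw_lt μ T hrect p
  -- Step A: collision-freeness including p
  have hfull : ∀ u v : Fin n, u ≠ v → rw μ T u = rw μ T v →
      cl μ T (g⁻¹ u) ≠ cl μ T (g⁻¹ v) := by
    suffices hp : ∀ k₀, k₀ ≠ p → rw μ T k₀ = rw μ T p →
        cl μ T (g⁻¹ k₀) ≠ cl μ T (g⁻¹ p) by
      intro u v huv hr hc
      rcases eq_or_ne u p with rfl | hup
      · exact hp v (Ne.symm huv) hr.symm hc.symm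
      rcases eq_or_ne v p with rfl | hvp
      · exact hp u huv hr hc
      · exact hno u v huv hup hvp hr hc
    intro k₀ hk₀ hrw hcl
    set i := rw μ T p with hi
    set RowI : Finset (Fin n) := Finset.univ.filter (fun k => rw μ T k = i) with hRowI
    set S : Finset ℕ := RowI.image (fun k => cl μ T (g⁻¹ k)) with hS
    have hpRow : p ∈ RowI := by simp [hRowI, hi]
    have hk₀Row : k₀ ∈ RowI := by simp [hRowI, hrw]
    have hScard : S.card ≤ b - 1 := by
      have himg : S = (RowI.erase k₀).image (fun k => cl μ T (g⁻¹ k)) := by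
        apply Finset.Subset.antisymm
        · intro j hj
          rw [hS, Finset.mem_image] at hj
          obtain ⟨k, hk, hkj⟩ := hj
          rcases eq_or_ne k k₀ with rfl | hkk
          · exact Finset.mem_image.2 ⟨p, Finset.mem_erase.2 ⟨Ne.symm hk₀, hpRow⟩,
              by rw [← hkj, hcl]⟩
          · exact Finset.mem_image.2 ⟨k, Finset.mem_erase.2 ⟨hkk, hk⟩, hkj⟩
        · exact Finset.image_subset_image (Finset.erase_subset _ _)
      rw [himg]
      calc ((RowI.erase k₀).image _).card ≤ (RowI.erase k₀).card := Finset.card_image_le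
        _ = RowI.card - 1 := Finset.card_erase_of_mem hk₀Row
        _ = b - 1 := by
            rw [hRowI, hi, rowCard_eq_rowLen, rowLen_rect μ hrect (hi ▸ ha)]
    have hSsub : S ⊆ Finset.range b := by
      intro j hj
      rw [hS, Finset.mem_image] at hj
      obtain ⟨k, _, hkj⟩ := hj
      rw [Finset.mem_range, ← hkj]
      exact cl_lt μ T hrect _
    have hb1 : 1 ≤ b := Nat.one_le_iff_ne_zero.2 (by
      intro h0
      exact absurd (cl_lt μ T hrect p) (by omega))
    obtain ⟨j₁, hj₁⟩ : (Finset.range b \ S).Nonempty := by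
      apply Finset.card_pos.1
      rw [Finset.card_sdiff_of_subset hSsub, Finset.card_range]
      omega
    have hj₁b : j₁ < b := Finset.mem_range.1 (Finset.mem_sdiff.1 hj₁).1
    have hj₁S : j₁ ∉ S := (Finset.mem_sdiff.1 hj₁).2
    set Q : Finset (Fin n) := Finset.univ.filter (fun k => cl μ T (g⁻¹ k) = j₁) with hQ
    have hQcard : Q.card = a := by
      have : Q.card = (Finset.univ.filter fun m => cl μ T m = j₁).card := by
        refine Finset.card_bij (fun k _ => g⁻¹ k) ?_ ?_ ?_
        · intro k hk
          exact Finset.mem_filter.2 ⟨Finset.mem_univ _, (Finset.mem_filter.1 hk).2⟩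
        · intro k _ k' _ h
          exact g⁻¹.injective h
        · intro m hm
          refine ⟨g m, Finset.mem_filter.2 ⟨Finset.mem_univ _, ?_⟩, by simp⟩
          have := (Finset.mem_filter.1 hm).2
          simpa using this
      rw [this, colCard_val μ T, colLen_rect μ hrect hj₁b]
    -- p is not in Q, and no element of Q is in row i
    have hrowQ : ∀ k ∈ Q, rw μ T k ≠ i := by
      intro k hk hki
      apply hj₁S
      rw [hS, Finset.mem_image]
      refine ⟨k, by simp [hRowI, hki], ?_⟩
      exact (Finset.mem_filter.1 hk).2
    have hpQ : ∀ k ∈ Q, k ≠ p := by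
      intro k hk hkp
      exact hrowQ k hk (hkp ▸ rfl)
    -- injection from Q into (range a).erase i
    have hinj : Q.card ≤ ((Finset.range a).erase i).card := by
      refine Finset.card_le_card_of_injOn (fun k => rw μ T k) ?_ ?_
      · intro k hk
        exact Finset.mem_erase.2 ⟨hrowQ k hk, Finset.mem_range.2 (rw_lt μ T hrect k)⟩
      · intro k hk k' hk' hr
        by_contra hkk
        exact hno k k' hkk (hpQ k hk) (hpQ k' hk') hr
          (((Finset.mem_filter.1 hk).2).trans ((Finset.mem_filter.1 hk').2).symm)
    rw [hQcard, Finset.card_erase_of_mem (Finset.mem_range.2 ha), Finset.card_range] at hinj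
    omega
  -- Step B: construct a factorization g = ρ·κ, contradicting hg
  have hmem : ∀ k : Fin n, (rw μ T k, cl μ T (g⁻¹ k)) ∈ μ.cells := by
    intro k
    rw [YoungDiagram.mem_cells]
    exact (hrect _).2 ⟨rw_lt μ T hrect k, cl_lt μ T hrect _⟩
  set f : Fin n → Fin n := fun k => T ⟨(rw μ T k, cl μ T (g⁻¹ k)), hmem k⟩ with hf
  have hfinj : Function.Injective f := by
    intro k k' h
    have h2 := T.injective h
    rw [Subtype.mk_eq_mk, Prod.mk.injEq] at h2
    by_contra hkk
    exact hfull k k' hkk h2.1 h2.2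
  set ρ' : Equiv.Perm (Fin n) := Equiv.ofBijective f (Finite.injective_iff_bijective.1 hfinj)
    with hρ'
  have hρ'app : ∀ k, ρ' k = f k := fun k => rfl
  have hρ'rw : ∀ k, rw μ T (ρ' k) = rw μ T k := by
    intro k
    rw [hρ'app, hf]
    simp [rw, Equiv.symm_apply_apply]
  have hρ'cl : ∀ k, cl μ T (ρ' k) = cl μ T (g⁻¹ k) := by
    intro k
    rw [hρ'app, hf]
    simp [cl, Equiv.symm_apply_apply]
  have hρ'mem : ρ' ∈ rowFinset μ T := (mem_rowFinset μ T).2 hρ'rw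
  set κ' : Equiv.Perm (Fin n) := g⁻¹ * ρ'⁻¹ with hκ'
  have hκ'mem : κ' ∈ colFinset μ T := by
    rw [mem_colFinset]
    intro y
    have : κ' y = g⁻¹ (ρ'⁻¹ y) := rfl
    rw [this]
    have := hρ'cl (ρ'⁻¹ y)
    rw [Equiv.Perm.apply_inv_self] at this
    exact this.symm
  refine hg ρ'⁻¹ (inv_mem_row μ T hρ'mem) κ'⁻¹ (inv_mem_col μ T hκ'mem) ?_
  rw [hκ']
  group


/-- Lemma F: the swap-sum vanishes off R·C -/
lemma sum_swap_mul_eq_zero (p : Fin n) {g : Equiv.Perm (Fin n)}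
    (hg : ∀ ρ ∈ rowFinset μ T, ∀ κ ∈ colFinset μ T, ρ * κ ≠ g) :
    ∑ k ∈ Finset.univ.filter (fun k => k ≠ p), cSym μ T (Equiv.swap p k * g) = 0 := by
  obtain ⟨u, v, huv, hup, hvp, hruv, hcluv⟩ := exists_good_pair μ T hrect p hg
  have hτp : Equiv.swap u v p = p := Equiv.swap_apply_of_ne_of_ne (Ne.symm hup) (Ne.symm hvp)
  have hguv : g⁻¹ u ≠ g⁻¹ v := fun h => huv (g⁻¹.injective h)
  have key : ∀ k : Fin n,
      cSym μ T (Equiv.swap p (Equiv.swap u v k) * g) = - cSym μ T (Equiv.swap p k * g) := by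
    intro k
    have h1 : Equiv.swap p (Equiv.swap u v k)
        = Equiv.swap u v * Equiv.swap p k * (Equiv.swap u v)⁻¹ := by
      conv_lhs => rw [← hτp]
      exact Equiv.swap_apply_apply (Equiv.swap u v) p k
    have hκ₀ : Equiv.swap (g⁻¹ u) (g⁻¹ v) = g⁻¹ * Equiv.swap u v * g⁻¹⁻¹ :=
      Equiv.swap_apply_apply g⁻¹ u v
    have h2 : Equiv.swap p (Equiv.swap u v k) * g
        = Equiv.swap u v * ((Equiv.swap p k * g) * Equiv.swap (g⁻¹ u) (g⁻¹ v)) := by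
      rw [h1, Equiv.swap_inv, hκ₀]
      group
    rw [h2, cSym_row_mul μ T (swap_mem_row μ T hruv),
      cSym_mul_col μ T (swap_mem_col μ T hcluv), sgn_swap hguv]
    ring
  refine Finset.sum_involution (fun k _ => Equiv.swap u v k) ?_ ?_ ?_ ?_
  · intro k _
    rw [key]; ring
  · intro k _ hfk hfix
    apply hfk
    have hfix' : Equiv.swap u v k = k := hfix
    have := key k
    rw [hfix'] at this
    have h0 : (2:ℂ) * cSym μ T (Equiv.swap p k * g) = 0 := by linear_combination this
    simpa using h0
  · intro k hk
    simp only [Finset.mem_filter, Finset.mem_univ, true_and] at hk ⊢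
    intro h
    exact hk (by
      have := congrArg (Equiv.swap u v) h
      rwa [Equiv.swap_apply_self, hτp] at this)
  · intro k _
    exact Equiv.swap_apply_self _ _ _

/-- Main coefficient identity -/
lemma main_coeff (p : Fin n) (g : Equiv.Perm (Fin n)) :
    ∑ k ∈ Finset.univ.filter (fun k => k ≠ p), cSym μ T (Equiv.swap p k * g) =
      ((b : ℂ) - (a : ℂ)) * cSym μ T g := by
  by_cases hfac : ∃ ρ ∈ rowFinset μ T, ∃ κ ∈ colFinset μ T, ρ * κ = g
  · obtain ⟨ρ, hρ, κ, hκ, rfl⟩ := hfac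
    have hstep : ∀ k : Fin n, cSym μ T (Equiv.swap p k * (ρ * κ)) =
        sgn κ * cSym μ T (Equiv.swap (ρ⁻¹ p) (ρ⁻¹ k)) := by
      intro k
      have h1 : Equiv.swap p k * (ρ * κ) = ((ρ * Equiv.swap (ρ⁻¹ p) (ρ⁻¹ k)) * κ) := by
        have h2 : Equiv.swap p k = ρ * Equiv.swap (ρ⁻¹ p) (ρ⁻¹ k) * ρ⁻¹ := by
          have := Equiv.swap_apply_apply ρ (ρ⁻¹ p) (ρ⁻¹ k)
          rwa [Equiv.Perm.apply_inv_self, Equiv.Perm.apply_inv_self] at this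
        rw [h2]
        group
      rw [h1, cSym_mul_col μ T hκ, cSym_row_mul μ T hρ]
    have hsum : ∑ k ∈ Finset.univ.filter (fun k => k ≠ p),
        cSym μ T (Equiv.swap (ρ⁻¹ p) (ρ⁻¹ k)) =
        ∑ k ∈ Finset.univ.filter (fun k => k ≠ ρ⁻¹ p),
          cSym μ T (Equiv.swap (ρ⁻¹ p) k) := by
      refine Finset.sum_nbij' (fun k => ρ⁻¹ k) (fun k => ρ k) ?_ ?_ ?_ ?_ ?_
      · intro k hk
        simp only [Finset.mem_filter, Finset.mem_univ, true_and] at hk ⊢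
        intro h; exact hk (ρ⁻¹.injective h)
      · intro k hk
        simp only [Finset.mem_filter, Finset.mem_univ, true_and] at hk ⊢
        intro h
        apply hk
        rw [← h]
        simp
      · intro k _; simp
      · intro k _; simp
      · intro k _; rfl
    calc ∑ k ∈ Finset.univ.filter (fun k => k ≠ p), cSym μ T (Equiv.swap p k * (ρ * κ))
        = ∑ k ∈ Finset.univ.filter (fun k => k ≠ p),
            sgn κ * cSym μ T (Equiv.swap (ρ⁻¹ p) (ρ⁻¹ k)) :=
          Finset.sum_congr rfl fun k _ => hstep k
      _ = sgn κ * ∑ k ∈ Finset.univ.filter (fun k => k ≠ p),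
            cSym μ T (Equiv.swap (ρ⁻¹ p) (ρ⁻¹ k)) := by rw [Finset.mul_sum]
      _ = sgn κ * ((b : ℂ) - (a : ℂ)) := by
          rw [hsum, sum_swap_coeff_rect μ T hrect]
      _ = ((b : ℂ) - (a : ℂ)) * cSym μ T (ρ * κ) := by
          rw [cSym_apply_mul μ T hρ hκ]; ring
  · have hg : ∀ ρ ∈ rowFinset μ T, ∀ κ ∈ colFinset μ T, ρ * κ ≠ g := by
      intro ρ hρ κ hκ h
      exact hfac ⟨ρ, hρ, κ, hκ, h⟩
    rw [sum_swap_mul_eq_zero μ T hrect p hg, cSym_apply_eq_zero μ T hg, mul_zero]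

end Rect

/-- L1: evaluation of the product of the JM-type element with cSym -/
lemma Dp_mul_apply (p : Fin n) (h : Equiv.Perm (Fin n)) :
    ((∑ k ∈ Finset.univ.filter (fun k => k ≠ p), ga (Equiv.swap p k)) * cSym μ T) h =
      ∑ k ∈ Finset.univ.filter (fun k => k ≠ p), cSym μ T (Equiv.swap p k * h) := by
  rw [Finset.sum_mul, MonoidAlgebra.coeff_sum, Finset.sum_apply']
  refine Finset.sum_congr rfl fun k _ => ?_
  rw [ga_eq, MonoidAlgebra.coeff_single_mul_apply, one_mul, Equiv.swap_inv]

/-- L2: commuting JM past a single -/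
lemma JM_mul_single [NeZero n] (g : Equiv.Perm (Fin n)) (w : ℂ) :
    JM n * MonoidAlgebra.single g w =
      MonoidAlgebra.single g w *
        ∑ k ∈ Finset.univ.filter (fun k => k ≠ g⁻¹ 0), ga (Equiv.swap (g⁻¹ 0) k) := by
  rw [JM, Finset.sum_mul, Finset.mul_sum]
  refine Finset.sum_nbij' (fun m => g⁻¹ m) (fun k => g k) ?_ ?_ ?_ ?_ ?_
  · intro m hm
    simp only [Finset.mem_filter, Finset.mem_univ, true_and] at hm ⊢
    intro h; exact hm (g⁻¹.injective h)
  · intro k hk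
    simp only [Finset.mem_filter, Finset.mem_univ, true_and] at hk ⊢
    intro h
    apply hk
    rw [← h]; simp
  · intro m _; simp
  · intro m _; simp
  · intro m _
    rw [ga_eq, ga_eq, MonoidAlgebra.single_mul_single, MonoidAlgebra.single_mul_single,
      one_mul, mul_one]
    congr 1
    have := Equiv.swap_apply_apply g⁻¹ (0 : Fin n) m
    rw [inv_inv] at this
    rw [this]
    group

section Rect2
variable {a b : ℕ} (hrect : ∀ x : ℕ × ℕ, x ∈ μ ↔ x.1 < a ∧ x.2 < b)
include hrect

/-- R1 -/
lemma Dp_mul_cSym (p : Fin n) :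
    (∑ k ∈ Finset.univ.filter (fun k => k ≠ p), ga (Equiv.swap p k)) * cSym μ T =
      ((b : ℂ) - (a : ℂ)) • cSym μ T := by
  refine MonoidAlgebra.ext (Finsupp.ext fun h => ?_)
  rw [Dp_mul_apply]
  have hm := main_coeff μ T hrect p h
  rw [hm, MonoidAlgebra.coeff_smul_apply, smul_eq_mul]

/-- R2: the scalar action on the whole left ideal -/
lemma JM_scalar [NeZero n] (y : GA n) :
    JM n * (y * cSym μ T) = ((b : ℂ) - (a : ℂ)) • (y * cSym μ T) := by
  induction y using MonoidAlgebra.induction_linear with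
  | zero => simp
  | add f g hf hg => rw [add_mul, mul_add, hf, hg, ← smul_add, ← add_mul]
  | single g w =>
      rw [← mul_assoc, JM_mul_single, mul_assoc, Dp_mul_cSym μ T hrect, mul_smul_comm]

end Rect2

/-- Forward: extraction of the eigenvalue equation at each cell -/
lemma forward_eq [NeZero n] {z : ℂ}
    (hz : ∀ y : GA n, JM n * (y * cSym μ T) = z • (y * cSym μ T)) (p : Fin n) :
    ((μ.rowLen (rw μ T p) : ℂ)) - ((μ.colLen (cl μ T p) : ℂ)) = z := by
  set g : Equiv.Perm (Fin n) := Equiv.swap 0 p with hg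
  have hginv : g⁻¹ 0 = p := by rw [hg, Equiv.swap_inv, Equiv.swap_apply_left]
  have h := hz (ga g)
  rw [ga_eq] at h
  rw [← mul_assoc, JM_mul_single, hginv, mul_assoc] at h
  have h2 := congrArg (fun f : GA n => f g) h
  rw [MonoidAlgebra.coeff_single_mul_apply, one_mul, inv_mul_cancel, Dp_mul_apply] at h2
  have hL : ∑ k ∈ Finset.univ.filter (fun k => k ≠ p), cSym μ T (Equiv.swap p k * 1) =
      ((μ.rowLen (rw μ T p) : ℂ)) - ((μ.colLen (cl μ T p) : ℂ)) := by
    have : ∀ k, Equiv.swap p k * 1 = Equiv.swap p k := fun k => mul_one _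
    simp only [this]
    rw [sum_swap_coeff, rowCard_eq_rowLen, colCard_eq_colLen]
  rw [hL] at h2
  have hR : (z • (MonoidAlgebra.single g (1:ℂ) * cSym μ T)) g = z := by
    rw [MonoidAlgebra.coeff_smul_apply, MonoidAlgebra.coeff_single_mul_apply, one_mul, inv_mul_cancel,
      cSym_apply_one, smul_eq_mul, mul_one]
  rw [hR] at h2
  exact h2

/-- Forward: the diagram must be a rectangle -/
lemma forward_rect [NeZero n] {z : ℂ}
    (hz : ∀ y : GA n, JM n * (y * cSym μ T) = z • (y * cSym μ T)) :
    ∃ a b : ℕ, ∀ x : ℕ × ℕ, x ∈ μ ↔ x.1 < a ∧ x.2 < b := by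
  refine ⟨μ.colLen 0, μ.rowLen 0, fun x => ?_⟩
  have hcell0 : (0, 0) ∈ μ := by
    have := cell_mem μ T 0
    exact μ.up_left_mem (Nat.zero_le _) (Nat.zero_le _) this
  have key : ∀ i, i < μ.colLen 0 → μ.rowLen i = μ.rowLen 0 := by
    intro i hi
    have hmem : (i, 0) ∈ μ.cells := (YoungDiagram.mem_cells _).2 (YoungDiagram.mem_iff_lt_colLen.2 hi)
    have hmem0 : ((0:ℕ), (0:ℕ)) ∈ μ.cells := (YoungDiagram.mem_cells _).2 hcell0
    have e1 := forward_eq μ T hz (T ⟨(i, 0), hmem⟩)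
    have e2 := forward_eq μ T hz (T ⟨(0, 0), hmem0⟩)
    have hr1 : rw μ T (T ⟨(i, 0), hmem⟩) = i := by simp [rw]
    have hc1 : cl μ T (T ⟨(i, 0), hmem⟩) = 0 := by simp [cl]
    have hr2 : rw μ T (T ⟨(0, 0), hmem0⟩) = 0 := by simp [rw]
    have hc2 : cl μ T (T ⟨(0, 0), hmem0⟩) = 0 := by simp [cl]
    rw [hr1, hc1] at e1
    rw [hr2, hc2] at e2
    have : (μ.rowLen i : ℂ) = (μ.rowLen 0 : ℂ) := by linear_combination e1 - e2
    exact_mod_cast this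
  constructor
  · intro hx
    constructor
    · have : (x.1, 0) ∈ μ := μ.up_left_mem le_rfl (Nat.zero_le _) (by rwa [Prod.mk.eta])
      exact YoungDiagram.mem_iff_lt_colLen.1 this
    · have : (0, x.2) ∈ μ := μ.up_left_mem (Nat.zero_le _) le_rfl (by rwa [Prod.mk.eta])
      exact YoungDiagram.mem_iff_lt_rowLen.1 this
  · rintro ⟨h1, h2⟩
    have hrl : μ.rowLen x.1 = μ.rowLen 0 := key x.1 h1
    have : (x.1, x.2) ∈ μ := YoungDiagram.mem_iff_lt_rowLen.2 (by rw [hrl]; exact h2)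
    rwa [Prod.mk.eta] at this

end StmtZero

/-- `C = s₁₂ + ⋯ + s₁ₙ` acts as a scalar on the irreducible representation
`π_μ` (realized as the left ideal generated by the Young symmetrizer `c_μ`) if and only if
the Young diagram `μ` is a rectangle; and on a rectangle of height `a` and width `b` the
scalar is `b - a`. -/
theorem stmt0 (n : ℕ) [NeZero n] (μ : YoungDiagram) (hcard : μ.card = n)
    (T : {x : ℕ × ℕ // x ∈ μ.cells} ≃ Fin n) :
    ((∃ z : ℂ, ∀ y : GA n, JM n * (y * cSym μ T) = z • (y * cSym μ T)) ↔
      (∃ a b : ℕ, ∀ x : ℕ × ℕ, x ∈ μ ↔ x.1 < a ∧ x.2 < b)) ∧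
    (∀ a b : ℕ, (∀ x : ℕ × ℕ, x ∈ μ ↔ x.1 < a ∧ x.2 < b) →
      ∀ y : GA n, JM n * (y * cSym μ T) = ((b : ℂ) - (a : ℂ)) • (y * cSym μ T)) := by
  constructor
  · constructor
    · rintro ⟨z, hz⟩
      exact StmtZero.forward_rect μ T hz
    · rintro ⟨a, b, hab⟩
      exact ⟨(b : ℂ) - (a : ℂ), fun y => StmtZero.JM_scalar μ T hab y⟩
  · intro a b hab y
    exact StmtZero.JM_scalar μ T hab y

end
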